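/- arXiv:1406.6121 — 4 statements merged into one kernel-verified Lean document; each statement's English description precedes it below -/
import Mathlib

section
/- Let a(ξ) ∈ ℤ_p[ξ_1,…,ξ_N] be an elliptic polynomial of degree d, i.e. a is homogeneous of degree d and a(ξ) = 0 only for ξ = 0. Then there exist positive real constants C₀ = C₀(a) and C₁ = C₁(a) such that C₀‖ξ‖_p^d ≤ |a(ξ)|_p ≤ C₁‖ξ‖_p^d for every ξ ∈ ℚ_p^N. -/
open MeasureTheory Complex Filter

section Preamble

variable (p : ℕ) [Fact p.Prime]

open Classical in
/-- The `p`-adic fractional part `{y}_p ∈ ℚ` of `y ∈ ℚ_p`. -/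
noncomputable def padicFrac (y : ℚ_[p]) : ℚ :=
  if h : ∃ n : ℕ, ‖y * (p : ℚ_[p]) ^ n‖ ≤ 1 then
    (PadicInt.appr (⟨y * (p : ℚ_[p]) ^ Nat.find h, Nat.find_spec h⟩ : ℤ_[p]) (Nat.find h) : ℚ)
      / (p : ℚ) ^ (Nat.find h)
  else 0

/-- The standard additive character `χ_p(y) = exp(2 π i {y}_p)` of `ℚ_p`. -/
noncomputable def padicChar (y : ℚ_[p]) : ℂ :=
  Complex.exp (2 * Real.pi * Complex.I * (padicFrac p y : ℂ))

noncomputable instance : MeasurableSpace ℚ_[p] := borel _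
instance : BorelSpace ℚ_[p] := ⟨rfl⟩

variable (N : ℕ)

/-- The Haar measure `d^N x` on `ℚ_p^N`, normalized so that `ℤ_p^N` (the closed unit
ball) has measure `1`. -/
noncomputable def QpHaar : Measure (Fin N → ℚ_[p]) :=
  Measure.addHaarMeasure
    ⟨⟨Metric.closedBall 0 1, isCompact_closedBall 0 1⟩,
      Set.Nonempty.mono Metric.ball_subset_interior_closedBall
        (Metric.nonempty_ball.mpr one_pos)⟩

/-- The Fourier transform `Ff(ξ) = ∫ χ_p(-ξ·x) f(x) d^N x` on `ℚ_p^N`. -/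
noncomputable def QpFT (f : (Fin N → ℚ_[p]) → ℂ) (ξ : Fin N → ℚ_[p]) : ℂ :=
  ∫ x, padicChar p (-(∑ j, ξ j * x j)) * f x ∂(QpHaar p N)

/-- Evaluation at `ξ ∈ ℚ_p^N` of a polynomial with coefficients in `ℤ_p`. -/
noncomputable def evalPoly (a : MvPolynomial (Fin N) ℤ_[p]) (ξ : Fin N → ℚ_[p]) : ℚ_[p] :=
  MvPolynomial.eval ξ (MvPolynomial.map (PadicInt.Coe.ringHom (p := p)) a)

/-- `a` is an elliptic polynomial of degree `d`: homogeneous of degree `d` and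
`a(ξ) = 0 ↔ ξ = 0`. -/
def IsElliptic (a : MvPolynomial (Fin N) ℤ_[p]) (d : ℕ) : Prop :=
  0 < d ∧ MvPolynomial.IsHomogeneous a d ∧
    ∀ ξ : Fin N → ℚ_[p], evalPoly p N a ξ = 0 ↔ ξ = 0

/-- The `p`-adic heat kernel `Γ(t,x) = ∫ χ_p(x·ξ) e^{-t |a(ξ)|_p^β} d^N ξ`. -/
noncomputable def heatKer (a : MvPolynomial (Fin N) ℤ_[p]) (β t : ℝ)
    (x : Fin N → ℚ_[p]) : ℂ :=
  ∫ ξ, padicChar p (∑ j, x j * ξ j) *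
    (Real.exp (-(t * ‖evalPoly p N a ξ‖ ^ β)) : ℝ) ∂(QpHaar p N)

/-- Bruhat--Schwartz test functions: locally constant with compact support. -/
def IsTestFn (f : (Fin N → ℚ_[p]) → ℂ) : Prop :=
  IsLocallyConstant f ∧ HasCompactSupport f

/-- The Bruhat--Schwartz space `D(ℚ_p^N)` as a `ℂ`-subspace of all functions. -/
noncomputable def BSspace : Submodule ℂ ((Fin N → ℚ_[p]) → ℂ) where
  carrier := {f | IsLocallyConstant f ∧ HasCompactSupport f}
  add_mem' hf hg := ⟨hf.1.add hg.1, hf.2.add hg.2⟩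
  zero_mem' := ⟨IsLocallyConstant.const 0, by
    simp [HasCompactSupport, tsupport, Function.support, isCompact_empty]⟩
  smul_mem' c f hf := by
    refine ⟨?_, ?_⟩
    · show IsLocallyConstant fun x => c • f x
      exact hf.1.comp (c • ·)
    · show HasCompactSupport fun x => c • f x
      exact hf.2.comp_left (g := (c • ·)) (smul_zero c)

open Classical in
/-- The pairing of a distribution `F ∈ D'(ℚ_p^N)` with a function which is
(known to be) a test function. -/
noncomputable def pairingD (F : BSspace p N →ₗ[ℂ] ℂ) (g : (Fin N → ℚ_[p]) → ℂ) : ℂ :=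
  if h : IsTestFn p N g then F ⟨g, h⟩ else 0

/-- Convolution `(f ∗ g)(x) = ∫ f(y) g(x − y) d^N y` on `ℚ_p^N`. -/
noncomputable def QpConv (f g : (Fin N → ℚ_[p]) → ℂ) (x : Fin N → ℚ_[p]) : ℂ :=
  ∫ y, f y * g (x - y) ∂(QpHaar p N)

open Classical in
/-- The Bessel potential `K_α` on `ℚ_p^N`. -/
noncomputable def besselK (α : ℝ) (x : Fin N → ℚ_[p]) : ℝ :=
  if x = 0 then 0
  else if ‖x‖ ≤ 1 then
    if α = N then (1 - (p : ℝ) ^ (-(N : ℝ))) * Real.logb p ((p : ℝ) / ‖x‖)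
    else ((1 - (p : ℝ) ^ (-α)) / (1 - (p : ℝ) ^ (α - (N : ℝ)))) *
      (‖x‖ ^ (α - (N : ℝ)) - (p : ℝ) ^ (α - (N : ℝ)))
  else 0

/-- `I₀(t,x) = (Γ(t)∗u₀)(x)` for `t > 0`, and `I₀(0,x) = u₀(x)`. -/
noncomputable def I0 (a : MvPolynomial (Fin N) ℤ_[p]) (β : ℝ) (u₀ : (Fin N → ℚ_[p]) → ℝ)
    (t : ℝ) (x : Fin N → ℚ_[p]) : ℂ :=
  if t = 0 then (u₀ x : ℂ)
  else ∫ y, heatKer p N a β t (x - y) * (u₀ y : ℂ) ∂(QpHaar p N)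

/-- The Hilbert space `U`: the completion of `D_ℝ(ℚ_p^N)` with respect to the
semi-inner product `⟨φ,ψ⟩_U = ∫ Fφ conj(Fψ) dμ`, realized concretely as the closure
in `L²(μ;ℂ)` of the space of Fourier transforms of real-valued test functions. -/
noncomputable def Uspace (μ : Measure (Fin N → ℚ_[p])) : Submodule ℝ (Lp ℂ 2 μ) :=
  (Submodule.span ℝ {g : Lp ℂ 2 μ | ∃ φ : (Fin N → ℚ_[p]) → ℝ,
      IsLocallyConstant φ ∧ HasCompactSupport φ ∧
      (g : (Fin N → ℚ_[p]) → ℂ) =ᵐ[μ] QpFT p N fun x => (φ x : ℂ)}).topologicalClosure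

end Preamble

lemma eval_mul_homog {R : Type*} [CommRing R] {σ : Type*} {φ : MvPolynomial σ R} {n : ℕ}
    (hφ : φ.IsHomogeneous n) (c : R) (x : σ → R) :
    MvPolynomial.eval (fun i => c * x i) φ = c ^ n * MvPolynomial.eval x φ := by
  rw [MvPolynomial.eval_eq, MvPolynomial.eval_eq, Finset.mul_sum]
  refine Finset.sum_congr rfl fun d hd => ?_
  have hdeg : d.degree = n := by
    by_contra h
    exact (MvPolynomial.mem_support_iff.mp hd) (hφ.coeff_eq_zero h)
  rw [← hdeg, Finsupp.degree_apply]
  simp_rw [mul_pow]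
  rw [Finset.prod_mul_distrib, Finset.prod_pow_eq_pow_sum]
  ring

/-- An elliptic polynomial of degree `d` satisfies
`C₀ ‖ξ‖_p^d ≤ |a(ξ)|_p ≤ C₁ ‖ξ‖_p^d`. -/
theorem elliptic_norm_bounds {p : ℕ} [Fact p.Prime] {N d : ℕ}
    (a : MvPolynomial (Fin N) ℤ_[p]) (ha : IsElliptic p N a d) :
    ∃ C₀ C₁ : ℝ, 0 < C₀ ∧ 0 < C₁ ∧ ∀ ξ : Fin N → ℚ_[p],
      C₀ * ‖ξ‖ ^ d ≤ ‖evalPoly p N a ξ‖ ∧ ‖evalPoly p N a ξ‖ ≤ C₁ * ‖ξ‖ ^ d := by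
  obtain ⟨hd, hhom, hzero⟩ := ha
  set b : MvPolynomial (Fin N) ℚ_[p] :=
    MvPolynomial.map (PadicInt.Coe.ringHom (p := p)) a with hb
  have hbhom : b.IsHomogeneous d := hhom.map _
  have heval : ∀ ξ, evalPoly p N a ξ = MvPolynomial.eval ξ b := fun ξ => rfl
  have ha0 : evalPoly p N a 0 = 0 := (hzero 0).mpr rfl
  rcases Nat.eq_zero_or_pos N with hN | hN
  · refine ⟨1, 1, one_pos, one_pos, fun ξ => ?_⟩
    have hξ : ξ = 0 := funext fun i => absurd i.2 (by omega)
    subst hξ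
    simp [ha0, zero_pow hd.ne']
  · haveI : Nonempty (Fin N) := ⟨⟨0, hN⟩⟩
    set S := Metric.sphere (0 : Fin N → ℚ_[p]) 1 with hS
    have hSc : IsCompact S := isCompact_sphere 0 1
    have hSne : S.Nonempty :=
      ⟨fun _ => 1, by simp [hS, mem_sphere_zero_iff_norm, pi_norm_const]⟩
    have hcont : Continuous fun η : Fin N → ℚ_[p] => ‖MvPolynomial.eval η b‖ :=
      (MvPolynomial.continuous_eval b).norm
    obtain ⟨η₀, hη₀S, hmin⟩ := hSc.exists_isMinOn hSne hcont.continuousOn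
    obtain ⟨η₁, hη₁S, hmax⟩ := hSc.exists_isMaxOn hSne hcont.continuousOn
    have hC₀pos : 0 < ‖MvPolynomial.eval η₀ b‖ := by
      rw [norm_pos_iff]
      intro h
      have h0 : η₀ = 0 := (hzero η₀).mp h
      have : ‖η₀‖ = 1 := mem_sphere_zero_iff_norm.mp hη₀S
      rw [h0] at this
      simp at this
    have hC₁pos : 0 < ‖MvPolynomial.eval η₁ b‖ := lt_of_lt_of_le hC₀pos (hmax hη₀S)
    refine ⟨‖MvPolynomial.eval η₀ b‖, ‖MvPolynomial.eval η₁ b‖, hC₀pos, hC₁pos, fun ξ => ?_⟩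
    rcases eq_or_ne ξ 0 with rfl | hξ
    · simp [ha0, zero_pow hd.ne']
    · obtain ⟨i₀, hi⟩ : ∃ i, ‖ξ‖ = ‖ξ i‖ := by
        obtain ⟨i, hi⟩ :=
          Finset.exists_mem_eq_sup Finset.univ Finset.univ_nonempty (fun i => ‖ξ i‖₊)
        exact ⟨i, by rw [Pi.norm_def, hi.2]; rfl⟩
      set c := ξ i₀ with hc
      have hcnorm : ‖c‖ = ‖ξ‖ := hi.symm
      have hc0 : c ≠ 0 := by
        intro h
        rw [h, norm_zero] at hcnorm
        exact hξ (norm_eq_zero.mp hcnorm.symm)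
      set η := fun i => c⁻¹ * ξ i with hη
      have hξη : ξ = fun i => c * η i := funext fun i => by
        simp [hη]
        field_simp
      have hcpos : (0 : ℝ) < ‖c‖ := norm_pos_iff.mpr hc0
      have hηS : η ∈ S := by
        rw [hS, mem_sphere_zero_iff_norm]
        refine le_antisymm ?_ ?_
        · refine (pi_norm_le_iff_of_nonneg zero_le_one).mpr fun i => ?_
          show ‖c⁻¹ * ξ i‖ ≤ 1
          rw [norm_mul, norm_inv, inv_mul_le_iff₀ hcpos, mul_one, hcnorm]
          exact norm_le_pi_norm ξ i
        · have h1 : ‖η i₀‖ = 1 := by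
            show ‖c⁻¹ * c‖ = 1
            rw [inv_mul_cancel₀ hc0, norm_one]
          exact h1 ▸ norm_le_pi_norm η i₀
      have hev : MvPolynomial.eval ξ b = c ^ d * MvPolynomial.eval η b := by
        calc MvPolynomial.eval ξ b = MvPolynomial.eval (fun i => c * η i) b := by rw [← hξη]
          _ = c ^ d * MvPolynomial.eval η b := eval_mul_homog hbhom c η
      have hnorm : ‖MvPolynomial.eval ξ b‖ = ‖ξ‖ ^ d * ‖MvPolynomial.eval η b‖ := by
        rw [hev, norm_mul, norm_pow, hcnorm]
      have hpow : (0 : ℝ) ≤ ‖ξ‖ ^ d := pow_nonneg (norm_nonneg _) d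
      constructor
      · rw [heval, hnorm, mul_comm (‖ξ‖ ^ d)]
        exact mul_le_mul_of_nonneg_right (hmin hηS) hpow
      · rw [heval, hnorm, mul_comm (‖ξ‖ ^ d)]
        exact mul_le_mul_of_nonneg_right (hmax hηS) hpow
end

section
/- (p-adic Bochner–Schwartz Theorem, converse direction) For every regular Borel measure μ on ℚ_p^N (finite on compact sets), the linear functional F on D(ℚ_p^N) defined by (F, φ) = ∫_{ℚ_p^N} (Fφ)(ξ) dμ(ξ) is a positive-definite distribution, i.e. (F, conj(φ ∗ φ̃)) ≥ 0 for every test function φ. -/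
open MeasureTheory Complex Filter

section Aux

variable (p : ℕ) [Fact p.Prime]

lemma padicFrac_exists (y : ℚ_[p]) : ∃ n : ℕ, ‖y * (p : ℚ_[p]) ^ n‖ ≤ 1 := by
  have hp1 : (1:ℝ) < p := by exact_mod_cast (Fact.out : p.Prime).one_lt
  obtain ⟨n, hn⟩ := pow_unbounded_of_one_lt (R := ℝ) ‖y‖ hp1
  refine ⟨n, ?_⟩
  rw [norm_mul, Padic.norm_p_pow]
  have hpn : (0:ℝ) < (p:ℝ) ^ (n:ℤ) := by positivity
  calc ‖y‖ * (p:ℝ) ^ (-n:ℤ) ≤ (p:ℝ)^(n:ℤ) * (p:ℝ)^(-n:ℤ) := by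
        apply mul_le_mul_of_nonneg_right _ (by positivity)
        exact_mod_cast hn.le.trans_eq (zpow_natCast (p:ℝ) n).symm
    _ = 1 := by rw [← zpow_add₀ (by exact_mod_cast (Fact.out : p.Prime).pos : (0:ℝ) < (p:ℝ)).ne']; simp

open Classical in
lemma padicFrac_prop (y : ℚ_[p]) :
    ‖y - ((padicFrac p y : ℚ) : ℚ_[p])‖ ≤ 1 ∧ ∃ n : ℕ, ∃ m : ℤ, padicFrac p y * (p:ℚ)^n = m := by
  have h := padicFrac_exists p y
  rw [padicFrac, dif_pos h]
  set n := Nat.find h with hn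
  set z : ℤ_[p] := ⟨y * (p : ℚ_[p]) ^ n, Nat.find_spec h⟩ with hz
  have hppos : (0:ℚ) < (p:ℚ) := by exact_mod_cast (Fact.out : p.Prime).pos
  constructor
  · have hspec : (p:ℤ_[p])^n ∣ z - (PadicInt.appr z n : ℤ_[p]) := by
      have := PadicInt.appr_spec n z
      rwa [Ideal.mem_span_singleton] at this
    have hnorm : ‖z - (PadicInt.appr z n : ℤ_[p])‖ ≤ (p:ℝ)^(-n:ℤ) :=
      (PadicInt.norm_le_pow_iff_mem_span_pow _ _).2 (PadicInt.appr_spec n z)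
    have hcoe : ((z - (PadicInt.appr z n : ℤ_[p]) : ℤ_[p]) : ℚ_[p])
        = y * (p : ℚ_[p]) ^ n - ((PadicInt.appr z n : ℚ) : ℚ_[p]) := by
      rw [PadicInt.coe_sub]
      push_cast [hz]
      ring
    have key : y - (((PadicInt.appr z n : ℚ) / (p:ℚ)^n : ℚ) : ℚ_[p])
        = ((z - (PadicInt.appr z n : ℤ_[p]) : ℤ_[p]) : ℚ_[p]) * ((p:ℚ_[p])^n)⁻¹ := by
      rw [hcoe]
      have hpn : ((p:ℚ_[p])^n) ≠ 0 := by
        apply pow_ne_zero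
        exact_mod_cast (Nat.cast_ne_zero (R := ℚ_[p])).2 (Fact.out : p.Prime).ne_zero
      field_simp
      push_cast
      field_simp
    rw [key, norm_mul]
    have h2 : ‖((z - (PadicInt.appr z n : ℤ_[p]) : ℤ_[p]) : ℚ_[p])‖ ≤ (p:ℝ)^(-n:ℤ) := by
      rw [PadicInt.padic_norm_e_of_padicInt]; exact hnorm
    have h3 : ‖((p:ℚ_[p])^n)⁻¹‖ = (p:ℝ)^(n:ℤ) := by
      rw [norm_inv, Padic.norm_p_pow]
      rw [← zpow_neg, neg_neg]
    rw [h3]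
    calc ‖((z - (PadicInt.appr z n : ℤ_[p]) : ℤ_[p]) : ℚ_[p])‖ * (p:ℝ)^(n:ℤ)
        ≤ (p:ℝ)^(-n:ℤ) * (p:ℝ)^(n:ℤ) := by
          apply mul_le_mul_of_nonneg_right h2 (by positivity)
      _ = 1 := by rw [← zpow_add₀ (by exact_mod_cast (Fact.out : p.Prime).pos : (0:ℝ) < (p:ℝ)).ne']; simp
  · refine ⟨n, PadicInt.appr z n, div_mul_cancel₀ _ ?_⟩
    exact pow_ne_zero _ (by exact_mod_cast (Fact.out : p.Prime).ne_zero)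

lemma rat_eq_int_of {q : ℚ} (hden : ∃ n : ℕ, ∃ m : ℤ, q * (p:ℚ)^n = m)
    (hnorm : ‖((q:ℚ):ℚ_[p])‖ ≤ 1) : ∃ m : ℤ, q = (m:ℚ) := by
  by_cases hq : q = 0
  · exact ⟨0, by simp [hq]⟩
  obtain ⟨n, m, hm⟩ := hden
  -- q.den divides p ^ n
  have hpow : ((p:ℚ))^n ≠ 0 := by
    exact pow_ne_zero _ (by exact_mod_cast (Fact.out : p.Prime).ne_zero)
  have hqd : q = (m : ℚ) / ((p:ℚ))^n := by rw [eq_div_iff hpow]; exact hm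
  have hdvd : (q.den : ℤ) ∣ (p:ℤ)^n := by
    have : q = ((m : ℚ)) / (((p^n : ℤ) : ℚ)) := by push_cast; exact hqd
    rw [this, ← Rat.divInt_eq_div]
    exact Rat.den_dvd m (p^n)
  have hdvd' : q.den ∣ p^n := by exact_mod_cast hdvd
  obtain ⟨k, hk, hden_eq⟩ := (Nat.dvd_prime_pow (Fact.out : p.Prime)).1 hdvd'
  -- suppose k ≠ 0, derive contradiction
  rcases Nat.eq_zero_or_pos k with hk0 | hk0
  · refine ⟨q.num, ?_⟩
    have : q.den = 1 := by rw [hden_eq, hk0, pow_zero]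
    exact_mod_cast (Rat.den_eq_one_iff q).1 this |>.symm
  exfalso
  have hpd : p ∣ q.den := hden_eq ▸ dvd_pow_self p hk0.ne'
  have hval_den : 1 ≤ padicValNat p q.den :=
    one_le_padicValNat_of_dvd q.den_ne_zero hpd
  have hnum : ¬ (p ∣ q.num.natAbs) := by
    intro hc
    have h1 : p ∣ Nat.gcd q.num.natAbs q.den := Nat.dvd_gcd hc hpd
    rw [q.reduced] at h1
    have := Nat.le_of_dvd one_pos h1
    exact absurd this (by have := (Fact.out : p.Prime).one_lt; omega)
  have hvnum : padicValInt p q.num = 0 := by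
    unfold padicValInt
    exact padicValNat.eq_zero_of_not_dvd hnum
  have hvrat : padicValRat p q ≤ -1 := by
    rw [padicValRat, hvnum]
    omega
  have hlt : (1:ℚ) < padicNorm p q := by
    rw [padicNorm.eq_zpow_of_nonzero hq]
    have hp1 : (1:ℚ) < (p:ℚ) := by exact_mod_cast (Fact.out : p.Prime).one_lt
    calc (1:ℚ) < (p:ℚ)^(1:ℤ) := by simpa using hp1
      _ ≤ (p:ℚ)^(-padicValRat p q) := by
        apply zpow_le_zpow_right₀ hp1.le
        omega
  have hle : padicNorm p q ≤ 1 := by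
    have := hnorm
    rw [Padic.eq_padicNorm] at this
    exact_mod_cast this
  exact absurd hle (not_le.2 hlt)

lemma expq_shift (x : ℂ) (m : ℤ) :
    Complex.exp (2*Real.pi*Complex.I*(x + m)) = Complex.exp (2*Real.pi*Complex.I*x) := by
  rw [mul_add, Complex.exp_add]
  have : (2*(Real.pi:ℂ)*Complex.I*m) = m * (2*Real.pi*Complex.I) := by ring
  rw [this, Complex.exp_int_mul_two_pi_mul_I, mul_one]

lemma expq_add (x y : ℂ) :
    Complex.exp (2*Real.pi*Complex.I*(x + y))
      = Complex.exp (2*Real.pi*Complex.I*x) * Complex.exp (2*Real.pi*Complex.I*y) := by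
  rw [mul_add, Complex.exp_add]

lemma qp_ball_add {a b : ℚ_[p]} (ha : ‖a‖ ≤ 1) (hb : ‖b‖ ≤ 1) : ‖a + b‖ ≤ 1 :=
  (Padic.nonarchimedean a b).trans (max_le ha hb)

lemma den_add {q r : ℚ} (hq : ∃ n : ℕ, ∃ m : ℤ, q * (p:ℚ)^n = m)
    (hr : ∃ n : ℕ, ∃ m : ℤ, r * (p:ℚ)^n = m) :
    ∃ n : ℕ, ∃ m : ℤ, (q + r) * (p:ℚ)^n = m := by
  obtain ⟨n1, m1, h1⟩ := hq
  obtain ⟨n2, m2, h2⟩ := hr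
  refine ⟨n1 + n2, m1 * p^n2 + m2 * p^n1, ?_⟩
  push_cast
  rw [← h1, ← h2]
  ring

lemma den_neg {q : ℚ} (hq : ∃ n : ℕ, ∃ m : ℤ, q * (p:ℚ)^n = m) :
    ∃ n : ℕ, ∃ m : ℤ, (-q) * (p:ℚ)^n = m := by
  obtain ⟨n1, m1, h1⟩ := hq
  exact ⟨n1, -m1, by push_cast; rw [← h1]; ring⟩

lemma padicFrac_den (y : ℚ_[p]) : ∃ n : ℕ, ∃ m : ℤ, padicFrac p y * (p:ℚ)^n = m :=
  (padicFrac_prop p y).2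

lemma padicFrac_norm (y : ℚ_[p]) : ‖y - ((padicFrac p y : ℚ) : ℚ_[p])‖ ≤ 1 :=
  (padicFrac_prop p y).1

lemma padicChar_add (a b : ℚ_[p]) :
    padicChar p (a + b) = padicChar p a * padicChar p b := by
  set q : ℚ := padicFrac p (a+b) - (padicFrac p a + padicFrac p b) with hqdef
  have hden : ∃ n : ℕ, ∃ m : ℤ, q * (p:ℚ)^n = m := by
    rw [hqdef, sub_eq_add_neg]
    exact den_add p (padicFrac_den p (a+b))
      (den_neg p (den_add p (padicFrac_den p a) (padicFrac_den p b)))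
  have hnorm : ‖((q:ℚ):ℚ_[p])‖ ≤ 1 := by
    have hcast : ((q:ℚ):ℚ_[p]) =
        -((a+b) - ((padicFrac p (a+b) : ℚ):ℚ_[p]))
          + ((a - ((padicFrac p a : ℚ):ℚ_[p])) + (b - ((padicFrac p b : ℚ):ℚ_[p]))) := by
      push_cast [hqdef]
      ring
    rw [hcast]
    apply qp_ball_add p
    · rw [norm_neg]; exact padicFrac_norm p _
    · exact qp_ball_add p (padicFrac_norm p a) (padicFrac_norm p b)
  obtain ⟨m, hm⟩ := rat_eq_int_of p hden hnorm
  have hfrac : padicFrac p (a+b) = padicFrac p a + padicFrac p b + m := by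
    rw [← hm, hqdef]; ring
  unfold padicChar
  have : ((padicFrac p (a+b) : ℚ) : ℂ) =
      ((padicFrac p a : ℚ) : ℂ) + ((padicFrac p b : ℚ) : ℂ) + (m : ℂ) := by
    exact_mod_cast congrArg (fun q : ℚ => (q : ℂ)) hfrac
  rw [this, expq_shift, expq_add]

lemma padicChar_eq_of_norm_le (y y' : ℚ_[p]) (h : ‖y - y'‖ ≤ 1) :
    padicChar p y = padicChar p y' := by
  set q : ℚ := padicFrac p y - padicFrac p y' with hqdef
  have hden : ∃ n : ℕ, ∃ m : ℤ, q * (p:ℚ)^n = m := by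
    rw [hqdef, sub_eq_add_neg]
    exact den_add p (padicFrac_den p y) (den_neg p (padicFrac_den p y'))
  have hnorm : ‖((q:ℚ):ℚ_[p])‖ ≤ 1 := by
    have hcast : ((q:ℚ):ℚ_[p]) =
        -(y - ((padicFrac p y : ℚ):ℚ_[p]))
          + ((y' - ((padicFrac p y' : ℚ):ℚ_[p])) + (y - y')) := by
      push_cast [hqdef]
      ring
    rw [hcast]
    apply qp_ball_add p
    · rw [norm_neg]; exact padicFrac_norm p _
    · exact qp_ball_add p (padicFrac_norm p y') h
  obtain ⟨m, hm⟩ := rat_eq_int_of p hden hnorm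
  have hfrac : padicFrac p y = padicFrac p y' + m := by rw [← hm, hqdef]; ring
  unfold padicChar
  have : ((padicFrac p y : ℚ) : ℂ) = ((padicFrac p y' : ℚ) : ℂ) + (m:ℂ) := by
    exact_mod_cast congrArg (fun q : ℚ => (q : ℂ)) hfrac
  rw [this, expq_shift]

lemma padicChar_conj (y : ℚ_[p]) :
    (starRingEnd ℂ) (padicChar p y) = padicChar p (-y) := by
  have h1 : (starRingEnd ℂ) (padicChar p y)
      = Complex.exp (2*Real.pi*Complex.I*(-(padicFrac p y : ℚ) : ℚ)) := by
    unfold padicChar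
    rw [← Complex.exp_conj]
    congr 1
    push_cast
    simp only [map_mul, map_ofNat, Complex.conj_ofReal, Complex.conj_I, map_ratCast]
    ring
  rw [h1]
  -- now compare -frac y with frac (-y)
  set q : ℚ := padicFrac p (-y) - (-(padicFrac p y)) with hqdef
  have hden : ∃ n : ℕ, ∃ m : ℤ, q * (p:ℚ)^n = m := by
    rw [hqdef, sub_neg_eq_add]
    exact den_add p (padicFrac_den p (-y)) (padicFrac_den p y)
  have hnorm : ‖((q:ℚ):ℚ_[p])‖ ≤ 1 := by
    have hcast : ((q:ℚ):ℚ_[p]) =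
        -((-y) - ((padicFrac p (-y) : ℚ):ℚ_[p]))
          + -(y - ((padicFrac p y : ℚ):ℚ_[p])) := by
      push_cast [hqdef]
      ring
    rw [hcast]
    apply qp_ball_add p
    · rw [norm_neg]; exact padicFrac_norm p _
    · rw [norm_neg]; exact padicFrac_norm p _
  obtain ⟨m, hm⟩ := rat_eq_int_of p hden hnorm
  have hfrac : padicFrac p (-y) = -(padicFrac p y) + m := by rw [← hm, hqdef]; ring
  unfold padicChar
  have : ((padicFrac p (-y) : ℚ) : ℂ) = ((-(padicFrac p y : ℚ) : ℚ) : ℂ) + (m:ℂ) := by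
    exact_mod_cast congrArg (fun q : ℚ => (q : ℂ)) hfrac
  rw [this, expq_shift]

lemma padicChar_norm_one (y : ℚ_[p]) : ‖padicChar p y‖ = 1 := by
  unfold padicChar
  rw [Complex.norm_exp]
  have : (2*(Real.pi:ℂ)*Complex.I*((padicFrac p y : ℚ):ℂ)).re = 0 := by
    simp [Complex.mul_re, Complex.mul_im]
  rw [this, Real.exp_zero]

lemma continuous_padicChar : Continuous (padicChar p) := by
  rw [continuous_iff_continuousAt]
  intro y
  have hev : ∀ᶠ z in nhds y, padicChar p z = padicChar p y := by
    filter_upwards [Metric.closedBall_mem_nhds y one_pos] with z hz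
    apply padicChar_eq_of_norm_le
    simpa [dist_eq_norm] using hz
  exact Filter.EventuallyEq.continuousAt hev


variable (N : ℕ)

instance : (QpHaar p N).IsAddHaarMeasure := by
  unfold QpHaar; infer_instance


lemma qp_dot_continuous (ξ : Fin N → ℚ_[p]) :
    Continuous (fun x : Fin N → ℚ_[p] => ∑ j, ξ j * x j) := by
  apply continuous_finset_sum
  intro j _
  exact continuous_const.mul (continuous_apply j)

lemma key_pointwise (φ : (Fin N → ℚ_[p]) → ℂ) (hφ : IsTestFn p N φ) (ξ : Fin N → ℚ_[p]) :
    QpFT p N (fun x => (starRingEnd ℂ)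
        (QpConv p N φ (fun z => (starRingEnd ℂ) (φ (-z))) x)) ξ
      = ((Complex.normSq (∫ z, padicChar p (∑ j, ξ j * z j) * φ z ∂(QpHaar p N)) : ℝ) : ℂ) := by
  set μH := QpHaar p N with hμH
  have hφc : Continuous φ := hφ.1.continuous
  have hφs : HasCompactSupport φ := hφ.2
  set C : ℂ := ∫ z, padicChar p (∑ j, ξ j * z j) * φ z ∂μH with hC
  -- the two-variable integrand
  set G : ((Fin N → ℚ_[p]) × (Fin N → ℚ_[p])) → ℂ :=
    fun q => padicChar p (-(∑ j, ξ j * q.1 j)) * ((starRingEnd ℂ) (φ q.2) * φ (q.2 - q.1))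
    with hG
  have hGcont : Continuous G := by
    apply Continuous.mul
    · exact (continuous_padicChar p).comp
        ((qp_dot_continuous p N ξ).comp continuous_fst).neg
    · exact ((continuous_star.comp hφc).comp continuous_snd).mul
        (hφc.comp (continuous_snd.sub continuous_fst))
  have hGsupp : HasCompactSupport G := by
    classical
    set K := tsupport φ with hK
    have hKc : IsCompact K := hφs
    set L : Set (Fin N → ℚ_[p]) := (fun r : (Fin N → ℚ_[p]) × (Fin N → ℚ_[p]) => r.1 - r.2) '' (K ×ˢ K) with hL
    have hLc : IsCompact L := (hKc.prod hKc).image (continuous_fst.sub continuous_snd)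
    apply HasCompactSupport.intro (hLc.prod hKc)
    intro q hq
    by_contra hne
    have h2 : φ q.2 ≠ 0 := by
      intro h; apply hne; simp [hG, h]
    have h3 : φ (q.2 - q.1) ≠ 0 := by
      intro h; apply hne; simp [hG, h]
    apply hq
    refine ⟨⟨(q.2, q.2 - q.1), ⟨subset_tsupport φ h2, subset_tsupport φ h3⟩, by simp⟩, subset_tsupport φ h2⟩
  have hGint : Integrable G (μH.prod μH) :=
    hGcont.integrable_of_hasCompactSupport hGsupp
  -- Step 1: rewrite the Fourier transform as a double integral
  have step1 : QpFT p N (fun x => (starRingEnd ℂ)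
      (QpConv p N φ (fun z => (starRingEnd ℂ) (φ (-z))) x)) ξ
      = ∫ x, ∫ y, G (x, y) ∂μH ∂μH := by
    unfold QpFT QpConv
    apply integral_congr_ae
    filter_upwards with x
    rw [← integral_conj, ← integral_const_mul]
    apply integral_congr_ae
    filter_upwards with y
    simp only [hG]
    rw [neg_sub]
    rw [map_mul, Complex.conj_conj]
  rw [step1]
  -- Step 2: Fubini
  rw [integral_integral_swap hGint]
  -- Step 3: compute the inner integral
  have step3 : ∀ y, (∫ x, G (x, y) ∂μH)
      = (starRingEnd ℂ) (φ y) * (padicChar p (-(∑ j, ξ j * y j)) * C) := by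
    intro y
    have h1 : (∫ x, G (x, y) ∂μH)
        = (starRingEnd ℂ) (φ y) * ∫ x, padicChar p (-(∑ j, ξ j * x j)) * φ (y - x) ∂μH := by
      rw [← integral_const_mul]
      apply integral_congr_ae
      filter_upwards with x
      simp only [hG]
      ring
    rw [h1]
    congr 1
    -- translate: x ↦ y - x
    have h2 : (∫ x, padicChar p (-(∑ j, ξ j * x j)) * φ (y - x) ∂μH)
        = ∫ u, padicChar p (-(∑ j, ξ j * (y - u) j)) * φ u ∂μH := by
      rw [← integral_sub_left_eq_self
        (fun u => padicChar p (-(∑ j, ξ j * (y - u) j)) * φ u) μH y]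
      apply integral_congr_ae
      filter_upwards with x
      simp [sub_sub_cancel]
    rw [h2]
    have h3 : ∀ u : Fin N → ℚ_[p], padicChar p (-(∑ j, ξ j * (y - u) j))
        = padicChar p (-(∑ j, ξ j * y j)) * padicChar p (∑ j, ξ j * u j) := by
      intro u
      rw [← padicChar_add]
      congr 1
      have : (∑ j, ξ j * (y - u) j) = (∑ j, ξ j * y j) - ∑ j, ξ j * u j := by
        rw [← Finset.sum_sub_distrib]
        apply Finset.sum_congr rfl
        intro j _
        simp [mul_sub]
      rw [this]
      ring
    calc (∫ u, padicChar p (-(∑ j, ξ j * (y - u) j)) * φ u ∂μH)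
        = ∫ u, padicChar p (-(∑ j, ξ j * y j)) * (padicChar p (∑ j, ξ j * u j) * φ u) ∂μH := by
          apply integral_congr_ae
          filter_upwards with u
          rw [h3 u]
          ring
      _ = padicChar p (-(∑ j, ξ j * y j)) * C := by
          rw [integral_const_mul]
  simp only [step3]
  -- Step 4: outer integral
  have step4 : (∫ y, (starRingEnd ℂ) (φ y) * (padicChar p (-(∑ j, ξ j * y j)) * C) ∂μH)
      = (starRingEnd ℂ) C * C := by
    calc (∫ y, (starRingEnd ℂ) (φ y) * (padicChar p (-(∑ j, ξ j * y j)) * C) ∂μH)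
        = (∫ y, (starRingEnd ℂ) (padicChar p (∑ j, ξ j * y j) * φ y) ∂μH) * C := by
          rw [← integral_mul_const]
          apply integral_congr_ae
          filter_upwards with y
          rw [map_mul, ← padicChar_conj]
          ring
      _ = (starRingEnd ℂ) C * C := by rw [integral_conj]
  rw [step4, mul_comm, Complex.mul_conj]


end Aux


/-- p-adic Bochner–Schwartz, converse direction. The Fourier transform of
a regular Borel measure is a positive-definite distribution: for every test function `φ`,
`(F, conj(φ ∗ φ̃)) = ∫ F(conj(φ ∗ φ̃))(ξ) dμ(ξ)` is real and nonnegative. -/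
theorem bochner_schwartz_converse {p : ℕ} [Fact p.Prime] {N : ℕ}
    (μ : Measure (Fin N → ℚ_[p])) [μ.Regular]
    (φ : (Fin N → ℚ_[p]) → ℂ) (hφ : IsTestFn p N φ) :
    0 ≤ (∫ ξ, QpFT p N (fun x => (starRingEnd ℂ)
          (QpConv p N φ (fun z => (starRingEnd ℂ) (φ (-z))) x)) ξ ∂μ).re ∧
    (∫ ξ, QpFT p N (fun x => (starRingEnd ℂ)
          (QpConv p N φ (fun z => (starRingEnd ℂ) (φ (-z))) x)) ξ ∂μ).im = 0 := by
  have hpt : ∀ ξ, QpFT p N (fun x => (starRingEnd ℂ)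
      (QpConv p N φ (fun z => (starRingEnd ℂ) (φ (-z))) x)) ξ
      = ((Complex.normSq (∫ z, padicChar p (∑ j, ξ j * z j) * φ z ∂(QpHaar p N)) : ℝ) : ℂ) :=
    key_pointwise p N φ hφ
  have heq : (∫ ξ, QpFT p N (fun x => (starRingEnd ℂ)
      (QpConv p N φ (fun z => (starRingEnd ℂ) (φ (-z))) x)) ξ ∂μ)
      = ((∫ ξ, Complex.normSq (∫ z, padicChar p (∑ j, ξ j * z j) * φ z ∂(QpHaar p N)) ∂μ : ℝ) : ℂ) := by
    rw [integral_congr_ae (Filter.Eventually.of_forall hpt)]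
    exact integral_ofReal
  rw [heq]
  constructor
  · rw [Complex.ofReal_re]
    exact integral_nonneg fun ξ => Complex.normSq_nonneg _
  · exact Complex.ofReal_im _
end

section
/- Let a be an elliptic polynomial of degree d with coefficients in ℤ_p, let β > 0, let T > 0, and let μ be a regular Borel measure on ℚ_p^N. Then ∫₀^T ∫_{ℚ_p^N} e^{−2t|a(ξ)|_p^β} dμ(ξ) dt < +∞ if and only if ∫_{ℚ_p^N} max(1,‖ξ‖_p)^{−dβ} dμ(ξ) < +∞. (Note that e^{−t|a(ξ)|_p^β} is the Fourier transform of the heat kernel Γ(t,·).) -/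
open MeasureTheory Complex Filter

section Aux
variable {p : ℕ} [Fact p.Prime] {N d : ℕ}

variable {p : ℕ} [Fact p.Prime] {N d : ℕ}


/-- exact-value upper bound for the exponential integral -/
theorem exp_int_le (s T : ℝ) (hs : 0 < s) (hT : 0 < T) :
    ∫ t in (0:ℝ)..T, Real.exp (-(2*t*s)) ≤ 1/(2*s) := by
  have h : ∀ t : ℝ, Real.exp (-(2*t*s)) = Real.exp (t * -(2*s)) := by
    intro t; ring_nf
  simp_rw [h]
  rw [intervalIntegral.integral_comp_mul_right Real.exp
      (neg_ne_zero.mpr (by positivity) : -(2*s) ≠ 0),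
    integral_exp]
  rw [smul_eq_mul, zero_mul, Real.exp_zero]
  have h1 : Real.exp (T * -(2*s)) ≤ 1 := Real.exp_le_one_iff.mpr (by nlinarith)
  have h2 : (0:ℝ) < Real.exp (T * -(2*s)) := Real.exp_pos _
  have h3 : (0:ℝ) < 2*s := by positivity
  have he : (-(2*s))⁻¹ * (Real.exp (T * -(2*s)) - 1)
      = (1 - Real.exp (T * -(2*s)))/(2*s) := by field_simp; ring
  rw [he, div_le_div_iff₀ h3 h3]
  nlinarith

theorem eval_homog_smul (P : MvPolynomial (Fin N) ℚ_[p]) (hP : P.IsHomogeneous d)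
    (c : ℚ_[p]) (ξ : Fin N → ℚ_[p]) :
    MvPolynomial.eval (c • ξ) P = c ^ d * MvPolynomial.eval ξ P := by
  rw [MvPolynomial.eval_eq, MvPolynomial.eval_eq, Finset.mul_sum]
  refine Finset.sum_congr rfl fun m hm => ?_
  have hd : ∑ i ∈ m.support, m i = d := by
    by_contra hne
    exact (MvPolynomial.mem_support_iff.mp hm)
      (hP.coeff_eq_zero (by simpa [Finsupp.degree_apply] using hne))
  calc MvPolynomial.coeff m P * ∏ i ∈ m.support, (c • ξ) i ^ m i
      = MvPolynomial.coeff m P * ∏ i ∈ m.support, (c ^ m i * ξ i ^ m i) := by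
        simp [Pi.smul_apply, smul_eq_mul, mul_pow]
    _ = MvPolynomial.coeff m P *
        ((∏ i ∈ m.support, c ^ m i) * ∏ i ∈ m.support, ξ i ^ m i) := by
        rw [Finset.prod_mul_distrib]
    _ = c ^ d * (MvPolynomial.coeff m P * ∏ i ∈ m.support, ξ i ^ m i) := by
        rw [Finset.prod_pow_eq_pow_sum, hd]; ring

theorem elliptic_upper (a : MvPolynomial (Fin N) ℤ_[p]) (ha : IsElliptic p N a d) :
    ∃ C₁ : ℝ, 1 ≤ C₁ ∧ ∀ ξ : Fin N → ℚ_[p], ‖evalPoly p N a ξ‖ ≤ C₁ * ‖ξ‖ ^ d := by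
  classical
  set P := MvPolynomial.map (PadicInt.Coe.ringHom (p := p)) a with hPdef
  have hP : P.IsHomogeneous d := ha.2.1.map _
  refine ⟨max 1 (P.support.card : ℝ), le_max_left _ _, fun ξ => ?_⟩
  have hterm : ∀ m ∈ P.support,
      ‖MvPolynomial.coeff m P * ∏ i ∈ m.support, ξ i ^ m i‖ ≤ ‖ξ‖ ^ d := by
    intro m hm
    have hd : ∑ i ∈ m.support, m i = d := by
      by_contra hne
      exact (MvPolynomial.mem_support_iff.mp hm)
        (hP.coeff_eq_zero (by simpa [Finsupp.degree_apply] using hne))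
    have hc : ‖MvPolynomial.coeff m P‖ ≤ 1 := by
      rw [hPdef, MvPolynomial.coeff_map]
      exact (a.coeff m).norm_le_one.trans_eq' (by simp [PadicInt.Coe.ringHom]; rfl)
    have hprod : ‖∏ i ∈ m.support, ξ i ^ m i‖ ≤ ‖ξ‖ ^ d := by
      rw [norm_prod]
      calc ∏ i ∈ m.support, ‖ξ i ^ m i‖
          ≤ ∏ i ∈ m.support, ‖ξ‖ ^ m i := by
            refine Finset.prod_le_prod (fun i _ => norm_nonneg _) (fun i _ => ?_)
            rw [norm_pow]
            exact pow_le_pow_left₀ (norm_nonneg _) (norm_le_pi_norm ξ i) _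
        _ = ‖ξ‖ ^ d := by rw [Finset.prod_pow_eq_pow_sum, hd]
    calc ‖MvPolynomial.coeff m P * ∏ i ∈ m.support, ξ i ^ m i‖
        = ‖MvPolynomial.coeff m P‖ * ‖∏ i ∈ m.support, ξ i ^ m i‖ := norm_mul _ _
      _ ≤ 1 * (‖ξ‖ ^ d) := by
          exact mul_le_mul hc hprod (norm_nonneg _) zero_le_one
      _ = ‖ξ‖ ^ d := one_mul _
  calc ‖evalPoly p N a ξ‖
      = ‖∑ m ∈ P.support, MvPolynomial.coeff m P * ∏ i ∈ m.support, ξ i ^ m i‖ := by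
        rw [evalPoly, ← hPdef, MvPolynomial.eval_eq]
    _ ≤ ∑ m ∈ P.support, ‖MvPolynomial.coeff m P * ∏ i ∈ m.support, ξ i ^ m i‖ :=
        norm_sum_le _ _
    _ ≤ ∑ _m ∈ P.support, ‖ξ‖ ^ d := Finset.sum_le_sum hterm
    _ = (P.support.card : ℝ) * ‖ξ‖ ^ d := by rw [Finset.sum_const, nsmul_eq_mul]
    _ ≤ max 1 (P.support.card : ℝ) * ‖ξ‖ ^ d :=
        mul_le_mul_of_nonneg_right (le_max_right _ _) (by positivity)

theorem elliptic_lower (a : MvPolynomial (Fin N) ℤ_[p]) (ha : IsElliptic p N a d) :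
    ∃ C₀ : ℝ, 0 < C₀ ∧ ∀ ξ : Fin N → ℚ_[p], C₀ * ‖ξ‖ ^ d ≤ ‖evalPoly p N a ξ‖ := by
  classical
  set P := MvPolynomial.map (PadicInt.Coe.ringHom (p := p)) a with hPdef
  have hP : P.IsHomogeneous d := ha.2.1.map _
  have hdpos : 0 < d := ha.1
  rcases Nat.eq_zero_or_pos N with hN | hN
  · refine ⟨1, one_pos, fun ξ => ?_⟩
    subst hN
    have hξ : ξ = 0 := Subsingleton.elim _ _
    rw [hξ, norm_zero, zero_pow hdpos.ne', mul_zero]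
    exact norm_nonneg _
  · haveI : Nonempty (Fin N) := ⟨⟨0, hN⟩⟩
    set S := Metric.sphere (0 : Fin N → ℚ_[p]) 1 with hSdef
    have hScompact : IsCompact S := isCompact_sphere _ _
    have hSne : S.Nonempty := by
      refine ⟨fun _ => (1 : ℚ_[p]), ?_⟩
      simp [hSdef, pi_norm_const]
    have hcont : Continuous fun ξ : Fin N → ℚ_[p] => ‖MvPolynomial.eval ξ P‖ :=
      P.continuous_eval.norm
    obtain ⟨ξ₀, hξ₀S, hmin⟩ := hScompact.exists_isMinOn hSne hcont.continuousOn
    have hξ₀norm : ‖ξ₀‖ = 1 := by simpa [hSdef] using hξ₀S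
    have hξ₀ne : ξ₀ ≠ 0 := by
      intro h; rw [h, norm_zero] at hξ₀norm; norm_num at hξ₀norm
    have hC₀pos : 0 < ‖MvPolynomial.eval ξ₀ P‖ := by
      rw [norm_pos_iff]
      intro h
      exact hξ₀ne ((ha.2.2 ξ₀).mp h)
    refine ⟨‖MvPolynomial.eval ξ₀ P‖, hC₀pos, fun ξ => ?_⟩
    by_cases hξ : ξ = 0
    · rw [hξ, norm_zero, zero_pow hdpos.ne', mul_zero]
      exact norm_nonneg _
    · have hξpos : 0 < ‖ξ‖ := norm_pos_iff.mpr hξ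
      obtain ⟨j, -, hj⟩ := Finset.exists_mem_eq_sup Finset.univ Finset.univ_nonempty
        (fun i => ‖ξ i‖₊)
      have hjnorm : ‖ξ j‖ = ‖ξ‖ := by
        rw [Pi.norm_def, hj, coe_nnnorm]
      have hjne : ξ j ≠ 0 := by
        intro h; rw [h, norm_zero] at hjnorm; exact hξpos.ne hjnorm
      set c : ℚ_[p] := (p : ℚ_[p]) ^ (ξ j).valuation with hcdef
      have hcnorm : ‖c‖ = ‖ξ‖ := by
        rw [hcdef, Padic.norm_p_zpow, ← hjnorm, Padic.norm_eq_zpow_neg_valuation hjne]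
      have hcne : c ≠ 0 := by
        intro h; rw [h, norm_zero] at hcnorm; exact hξpos.ne hcnorm
      set η : Fin N → ℚ_[p] := c⁻¹ • ξ with hηdef
      have hηnorm : ‖η‖ = 1 := by
        rw [hηdef, norm_smul, norm_inv, hcnorm, inv_mul_cancel₀ hξpos.ne']
      have hηS : η ∈ S := by simp [hSdef, hηnorm]
      have hback : c • η = ξ := by rw [hηdef, smul_inv_smul₀ hcne]
      have heval : MvPolynomial.eval ξ P = c ^ d * MvPolynomial.eval η P := by
        rw [← hback, eval_homog_smul P hP]
      calc ‖MvPolynomial.eval ξ₀ P‖ * ‖ξ‖ ^ d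
          ≤ ‖MvPolynomial.eval η P‖ * ‖ξ‖ ^ d := by
            refine mul_le_mul_of_nonneg_right (hmin hηS) (by positivity)
        _ = ‖MvPolynomial.eval ξ P‖ := by
            rw [heval, norm_mul, norm_pow, hcnorm]; ring
theorem glb1 (s T : ℝ) (hs : 0 ≤ s) (hT : 0 < T) :
    ∫⁻ t in Set.Ioc (0:ℝ) T, ENNReal.ofReal (Real.exp (-(2*t*s))) ≤ ENNReal.ofReal T := by
  have h1 : ∀ t ∈ Set.Ioc (0:ℝ) T, ENNReal.ofReal (Real.exp (-(2*t*s))) ≤ 1 := by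
    intro t ht
    refine ENNReal.ofReal_le_one.mpr (Real.exp_le_one_iff.mpr ?_)
    nlinarith [ht.1]
  calc ∫⁻ t in Set.Ioc (0:ℝ) T, ENNReal.ofReal (Real.exp (-(2*t*s)))
      ≤ ∫⁻ _t in Set.Ioc (0:ℝ) T, (1:ENNReal) := setLIntegral_mono measurable_const h1
    _ = ENNReal.ofReal T := by
        rw [setLIntegral_const, one_mul, Real.volume_Ioc, sub_zero]

theorem glb2 (s T : ℝ) (hs : 0 < s) (hT : 0 < T) :
    ∫⁻ t in Set.Ioc (0:ℝ) T, ENNReal.ofReal (Real.exp (-(2*t*s)))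
      ≤ ENNReal.ofReal (1/(2*s)) := by
  rw [← MeasureTheory.ofReal_integral_eq_lintegral_ofReal]
  · refine ENNReal.ofReal_le_ofReal ?_
    rw [← intervalIntegral.integral_of_le hT.le]
    exact exp_int_le s T hs hT
  · exact (Real.continuous_exp.comp (by fun_prop)).integrableOn_Ioc
  · exact Filter.Eventually.of_forall fun t => (Real.exp_pos _).le

theorem glb3 (s T τ : ℝ) (hs : 0 ≤ s) (hτ : 0 < τ) (hτT : τ ≤ T) :
    ENNReal.ofReal (τ * Real.exp (-(2*τ*s))) ≤
      ∫⁻ t in Set.Ioc (0:ℝ) T, ENNReal.ofReal (Real.exp (-(2*t*s))) := by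
  have hsub : Set.Ioc (0:ℝ) τ ⊆ Set.Ioc 0 T := Set.Ioc_subset_Ioc_right hτT
  refine le_trans ?_ (lintegral_mono_set hsub)
  have h1 : ∀ t ∈ Set.Ioc (0:ℝ) τ,
      ENNReal.ofReal (Real.exp (-(2*τ*s))) ≤ ENNReal.ofReal (Real.exp (-(2*t*s))) := by
    intro t ht
    refine ENNReal.ofReal_le_ofReal (Real.exp_le_exp.mpr ?_)
    nlinarith [ht.2]
  calc ENNReal.ofReal (τ * Real.exp (-(2*τ*s)))
      = ∫⁻ _t in Set.Ioc (0:ℝ) τ, ENNReal.ofReal (Real.exp (-(2*τ*s))) := by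
        rw [setLIntegral_const, Real.volume_Ioc, sub_zero,
          ← ENNReal.ofReal_mul (Real.exp_nonneg _), mul_comm]
    _ ≤ ∫⁻ t in Set.Ioc (0:ℝ) τ, ENNReal.ofReal (Real.exp (-(2*t*s))) :=
        setLIntegral_mono (by fun_prop) h1

end Aux


set_option maxHeartbeats 1000000 in
/-- `∫₀^T ∫ e^{-2t|a(ξ)|_p^β} dμ(ξ) dt < ∞` iff
`∫ max(1,‖ξ‖_p)^{-dβ} dμ(ξ) < ∞`. -/
theorem heat_fourier_square_integrable_iff {p : ℕ} [Fact p.Prime] {N d : ℕ}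
    (a : MvPolynomial (Fin N) ℤ_[p]) (ha : IsElliptic p N a d)
    (β T : ℝ) (hβ : 0 < β) (hT : 0 < T)
    (μ : Measure (Fin N → ℚ_[p])) [μ.Regular] :
    (∫⁻ t in Set.Ioc (0 : ℝ) T,
        ∫⁻ ξ, ENNReal.ofReal (Real.exp (-(2 * t * ‖evalPoly p N a ξ‖ ^ β))) ∂μ < ⊤) ↔
    (∫⁻ ξ, ENNReal.ofReal ((max 1 ‖ξ‖ : ℝ) ^ (-((d : ℝ) * β))) ∂μ < ⊤) := by
    classical
  obtain ⟨C₁, hC₁, hub⟩ := elliptic_upper a ha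
  obtain ⟨C₀, hC₀, hlb⟩ := elliptic_lower a ha
  -- abbreviations
  set M : ℝ := C₁ ^ β with hMdef
  have hM1 : (1:ℝ) ≤ M := Real.one_le_rpow hC₁ hβ.le
  have hMpos : (0:ℝ) < M := lt_of_lt_of_le one_pos hM1
  set m : ℝ := C₀ ^ β with hmdef
  have hmpos : (0:ℝ) < m := Real.rpow_pos_of_pos hC₀ β
  have hC₁0 : (0:ℝ) ≤ C₁ := le_trans zero_le_one hC₁
  -- properties of s ξ := ‖evalPoly p N a ξ‖ ^ β
  have hs_nonneg : ∀ ξ : Fin N → ℚ_[p], (0:ℝ) ≤ ‖evalPoly p N a ξ‖ ^ β :=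
    fun ξ => Real.rpow_nonneg (norm_nonneg _) β
  have hpow_eq : ∀ x : ℝ, 0 ≤ x → (x ^ d) ^ β = x ^ ((d:ℝ) * β) := by
    intro x hx
    rw [← Real.rpow_natCast x d, ← Real.rpow_mul hx]
  have hs_le : ∀ ξ : Fin N → ℚ_[p],
      ‖evalPoly p N a ξ‖ ^ β ≤ M * ‖ξ‖ ^ ((d:ℝ) * β) := by
    intro ξ
    calc ‖evalPoly p N a ξ‖ ^ β
        ≤ (C₁ * ‖ξ‖ ^ d) ^ β := Real.rpow_le_rpow (norm_nonneg _) (hub ξ) hβ.le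
      _ = M * (‖ξ‖ ^ d) ^ β := Real.mul_rpow hC₁0 (by positivity)
      _ = M * ‖ξ‖ ^ ((d:ℝ) * β) := by rw [hpow_eq _ (norm_nonneg ξ)]
  have hs_ge : ∀ ξ : Fin N → ℚ_[p],
      m * ‖ξ‖ ^ ((d:ℝ) * β) ≤ ‖evalPoly p N a ξ‖ ^ β := by
    intro ξ
    calc m * ‖ξ‖ ^ ((d:ℝ) * β) = (C₀ * ‖ξ‖ ^ d) ^ β := by
          rw [Real.mul_rpow hC₀.le (by positivity), hpow_eq _ (norm_nonneg ξ)]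
      _ ≤ ‖evalPoly p N a ξ‖ ^ β := Real.rpow_le_rpow (by positivity) (hlb ξ) hβ.le
  have hs_le_M : ∀ ξ : Fin N → ℚ_[p], ‖ξ‖ ≤ 1 → ‖evalPoly p N a ξ‖ ^ β ≤ M := by
    intro ξ hξ
    refine le_trans (hs_le ξ) ?_
    have h1 : ‖ξ‖ ^ ((d:ℝ) * β) ≤ 1 :=
      Real.rpow_le_one (norm_nonneg _) hξ (by positivity)
    nlinarith
  -- the two constants
  set cL : ℝ := min (T * Real.exp (-(2*T*M))) (Real.exp (-2) * min (T*m) 1 / M) with hcLdef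
  have hcLpos : 0 < cL := lt_min (by positivity) (by positivity)
  set CU : ℝ := max T (1/(2*m)) with hCUdef
  have hCUpos : 0 < CU := lt_of_lt_of_le hT (le_max_left _ _)
  -- the function h
  set hfun : (Fin N → ℚ_[p]) → ℝ := fun ξ => (max 1 ‖ξ‖ : ℝ) ^ (-((d : ℝ) * β)) with hhdef
  have hhnonneg : ∀ ξ, 0 ≤ hfun ξ := fun ξ => Real.rpow_nonneg (by positivity) _
  -- swap
  have hmeasF : Measurable (Function.uncurry fun (t : ℝ) (ξ : Fin N → ℚ_[p]) =>
      ENNReal.ofReal (Real.exp (-(2 * t * ‖evalPoly p N a ξ‖ ^ β)))) := by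
    have hcont : Continuous fun ξ : Fin N → ℚ_[p] => ‖evalPoly p N a ξ‖ ^ β :=
      (Real.continuous_rpow_const hβ.le).comp
        (MvPolynomial.continuous_eval _).norm
    exact ENNReal.measurable_ofReal.comp <| Real.measurable_exp.comp <|
      ((measurable_const.mul measurable_fst).mul
        (hcont.measurable.comp measurable_snd)).neg
  have hswap : (∫⁻ t in Set.Ioc (0:ℝ) T,
        ∫⁻ ξ, ENNReal.ofReal (Real.exp (-(2 * t * ‖evalPoly p N a ξ‖ ^ β))) ∂μ)
      = ∫⁻ ξ, (∫⁻ t in Set.Ioc (0:ℝ) T,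
          ENNReal.ofReal (Real.exp (-(2 * t * ‖evalPoly p N a ξ‖ ^ β)))) ∂μ :=
    lintegral_lintegral_swap hmeasF.aemeasurable
  -- pointwise upper estimate
  have claimU : ∀ ξ : Fin N → ℚ_[p],
      (∫⁻ t in Set.Ioc (0:ℝ) T,
        ENNReal.ofReal (Real.exp (-(2 * t * ‖evalPoly p N a ξ‖ ^ β))))
      ≤ ENNReal.ofReal CU * ENNReal.ofReal (hfun ξ) := by
    intro ξ
    by_cases hξ : ‖ξ‖ ≤ 1
    · have hmax : max 1 ‖ξ‖ = 1 := max_eq_left hξ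
      have hh1 : hfun ξ = 1 := by rw [hhdef]; simp only [hmax, Real.one_rpow]
      rw [hh1, ENNReal.ofReal_one, mul_one]
      exact le_trans (glb1 _ T (hs_nonneg ξ) hT)
        (ENNReal.ofReal_le_ofReal (le_max_left _ _))
    · push_neg at hξ
      have hmax : max 1 ‖ξ‖ = ‖ξ‖ := max_eq_right hξ.le
      have hX1 : (1:ℝ) ≤ ‖ξ‖ ^ ((d:ℝ) * β) :=
        Real.one_le_rpow hξ.le (by positivity)
      have hXpos : (0:ℝ) < ‖ξ‖ ^ ((d:ℝ) * β) := lt_of_lt_of_le one_pos hX1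
      have hspos : (0:ℝ) < ‖evalPoly p N a ξ‖ ^ β :=
        lt_of_lt_of_le (by positivity) (hs_ge ξ)
      refine le_trans (glb2 _ T hspos hT) ?_
      have hreal : 1/(2 * ‖evalPoly p N a ξ‖ ^ β) ≤ CU * hfun ξ := by
        have h1 : 1/(2 * ‖evalPoly p N a ξ‖ ^ β) ≤ 1/(2 * (m * ‖ξ‖ ^ ((d:ℝ)*β))) := by
          refine one_div_le_one_div_of_le (by positivity) ?_
          nlinarith [hs_ge ξ]
        refine le_trans h1 ?_
        have h2 : hfun ξ = (‖ξ‖ ^ ((d:ℝ)*β))⁻¹ := by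
          rw [hhdef]; simp only [hmax]
          rw [Real.rpow_neg (norm_nonneg _)]
        rw [h2]
        have h3 : 1/(2 * (m * ‖ξ‖ ^ ((d:ℝ)*β))) = (1/(2*m)) * (‖ξ‖ ^ ((d:ℝ)*β))⁻¹ := by
          field_simp
        rw [h3]
        exact mul_le_mul_of_nonneg_right (le_max_right _ _) (by positivity)
      calc ENNReal.ofReal (1/(2 * ‖evalPoly p N a ξ‖ ^ β))
          ≤ ENNReal.ofReal (CU * hfun ξ) := ENNReal.ofReal_le_ofReal hreal
        _ = ENNReal.ofReal CU * ENNReal.ofReal (hfun ξ) :=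
            ENNReal.ofReal_mul hCUpos.le
  -- pointwise lower estimate
  have claimL : ∀ ξ : Fin N → ℚ_[p],
      ENNReal.ofReal cL * ENNReal.ofReal (hfun ξ)
      ≤ (∫⁻ t in Set.Ioc (0:ℝ) T,
          ENNReal.ofReal (Real.exp (-(2 * t * ‖evalPoly p N a ξ‖ ^ β)))) := by
    intro ξ
    rw [← ENNReal.ofReal_mul hcLpos.le]
    by_cases hξ : ‖ξ‖ ≤ 1
    · have hmax : max 1 ‖ξ‖ = 1 := max_eq_left hξ
      have hh1 : hfun ξ = 1 := by rw [hhdef]; simp only [hmax, Real.one_rpow]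
      rw [hh1, mul_one]
      refine le_trans ?_ (glb3 _ T T (hs_nonneg ξ) hT le_rfl)
      refine ENNReal.ofReal_le_ofReal ?_
      have h1 : Real.exp (-(2*T*M)) ≤ Real.exp (-(2*T*(‖evalPoly p N a ξ‖ ^ β))) := by
        refine Real.exp_le_exp.mpr ?_
        nlinarith [hs_le_M ξ hξ]
      calc cL ≤ T * Real.exp (-(2*T*M)) := min_le_left _ _
        _ ≤ T * Real.exp (-(2*T*(‖evalPoly p N a ξ‖ ^ β))) := by nlinarith
    · push_neg at hξ
      have hmax : max 1 ‖ξ‖ = ‖ξ‖ := max_eq_right hξ.le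
      have hX1 : (1:ℝ) ≤ ‖ξ‖ ^ ((d:ℝ) * β) :=
        Real.one_le_rpow hξ.le (by positivity)
      have hXpos : (0:ℝ) < ‖ξ‖ ^ ((d:ℝ) * β) := lt_of_lt_of_le one_pos hX1
      set sξ : ℝ := ‖evalPoly p N a ξ‖ ^ β with hsξ
      have hspos : (0:ℝ) < sξ := lt_of_lt_of_le (by positivity) (hs_ge ξ)
      set τ : ℝ := min T (1/sξ) with hτdef
      have hτpos : 0 < τ := lt_min hT (by positivity)
      have hτT : τ ≤ T := min_le_left _ _
      refine le_trans ?_ (glb3 sξ T τ hspos.le hτpos hτT)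
      refine ENNReal.ofReal_le_ofReal ?_
      -- τ * sξ ≤ 1
      have hτs1 : τ * sξ ≤ 1 := by
        calc τ * sξ ≤ (1/sξ) * sξ :=
              mul_le_mul_of_nonneg_right (min_le_right _ _) hspos.le
          _ = 1 := by field_simp
      have hexp : Real.exp (-2) ≤ Real.exp (-(2*τ*sξ)) := by
        refine Real.exp_le_exp.mpr (by nlinarith)
      -- τ * sξ ≥ min (T*m) 1
      have hτs2 : min (T*m) 1 ≤ τ * sξ := by
        rcases min_cases T (1/sξ) with ⟨he, -⟩ | ⟨he, -⟩
        · rw [hτdef, he]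
          calc min (T*m) 1 ≤ T*m := min_le_left _ _
            _ ≤ T * sξ := by nlinarith [hs_ge ξ, hX1, (by nlinarith [hs_ge ξ] : m ≤ sξ)]
        · rw [hτdef, he]
          rw [one_div, inv_mul_cancel₀ hspos.ne']
          exact min_le_right _ _
      have hsle' : sξ ≤ M * ‖ξ‖ ^ ((d:ℝ)*β) := hs_le ξ
      have hminpos : 0 < min (T*m) 1 := lt_min (by positivity) one_pos
      have hhval : hfun ξ = (‖ξ‖ ^ ((d:ℝ)*β))⁻¹ := by
        rw [hhdef]; simp only [hmax]
        rw [Real.rpow_neg (norm_nonneg _)]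
      -- main chain
      have hτge : min (T*m) 1 / sξ ≤ τ := by
        rw [div_le_iff₀ hspos]; exact hτs2
      have hdiv : Real.exp (-2) * min (T*m) 1 / M * hfun ξ
          ≤ τ * Real.exp (-(2*τ*sξ)) := by
        have h4 : min (T*m) 1 / (M * ‖ξ‖ ^ ((d:ℝ)*β)) ≤ min (T*m) 1 / sξ := by
          refine div_le_div_of_nonneg_left hminpos.le hspos ?_
          exact hsle'
        have h5 : min (T*m) 1 / (M * ‖ξ‖ ^ ((d:ℝ)*β))
            = (min (T*m) 1 / M) * (‖ξ‖ ^ ((d:ℝ)*β))⁻¹ := by field_simp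
        have h6 : (min (T*m) 1 / M) * hfun ξ ≤ τ := by
          rw [hhval, ← h5]; exact le_trans h4 hτge
        have h7 : 0 ≤ (min (T*m) 1 / M) * hfun ξ := by
          have := hhnonneg ξ; positivity
        calc Real.exp (-2) * min (T*m) 1 / M * hfun ξ
            = (min (T*m) 1 / M * hfun ξ) * Real.exp (-2) := by ring
          _ ≤ τ * Real.exp (-(2*τ*sξ)) := by
              refine mul_le_mul h6 hexp (Real.exp_pos _).le hτpos.le
      calc cL * hfun ξ ≤ Real.exp (-2) * min (T*m) 1 / M * hfun ξ :=
            mul_le_mul_of_nonneg_right (min_le_right _ _) (hhnonneg ξ)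
        _ ≤ τ * Real.exp (-(2*τ*sξ)) := hdiv
  -- conclude
  rw [hswap]
  have hcLne : ENNReal.ofReal cL ≠ 0 := (ENNReal.ofReal_pos.mpr hcLpos).ne'
  constructor
  · intro hfin
    have hptw : ∀ ξ, ENNReal.ofReal (hfun ξ)
        ≤ (ENNReal.ofReal cL)⁻¹ * (∫⁻ t in Set.Ioc (0:ℝ) T,
            ENNReal.ofReal (Real.exp (-(2 * t * ‖evalPoly p N a ξ‖ ^ β)))) := by
      intro ξ
      have h0 : ENNReal.ofReal (hfun ξ)
          = (ENNReal.ofReal cL)⁻¹ * (ENNReal.ofReal cL * ENNReal.ofReal (hfun ξ)) := by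
        rw [← mul_assoc, ENNReal.inv_mul_cancel hcLne ENNReal.ofReal_ne_top, one_mul]
      rw [h0]
      exact mul_le_mul_right (claimL ξ) _
    calc ∫⁻ ξ, ENNReal.ofReal ((max 1 ‖ξ‖ : ℝ) ^ (-((d : ℝ) * β))) ∂μ
        = ∫⁻ ξ, ENNReal.ofReal (hfun ξ) ∂μ := rfl
      _ ≤ ∫⁻ ξ, (ENNReal.ofReal cL)⁻¹ * (∫⁻ t in Set.Ioc (0:ℝ) T,
            ENNReal.ofReal (Real.exp (-(2 * t * ‖evalPoly p N a ξ‖ ^ β)))) ∂μ :=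
          lintegral_mono hptw
      _ = (ENNReal.ofReal cL)⁻¹ * ∫⁻ ξ, (∫⁻ t in Set.Ioc (0:ℝ) T,
            ENNReal.ofReal (Real.exp (-(2 * t * ‖evalPoly p N a ξ‖ ^ β)))) ∂μ :=
          lintegral_const_mul' _ _ (ENNReal.inv_ne_top.mpr hcLne)
      _ < ⊤ := ENNReal.mul_lt_top (ENNReal.inv_lt_top.mpr (ENNReal.ofReal_pos.mpr hcLpos)) hfin
  · intro hfin
    calc ∫⁻ ξ, (∫⁻ t in Set.Ioc (0:ℝ) T,
          ENNReal.ofReal (Real.exp (-(2 * t * ‖evalPoly p N a ξ‖ ^ β)))) ∂μ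
        ≤ ∫⁻ ξ, ENNReal.ofReal CU * ENNReal.ofReal (hfun ξ) ∂μ := lintegral_mono claimU
      _ = ENNReal.ofReal CU * ∫⁻ ξ, ENNReal.ofReal (hfun ξ) ∂μ :=
          lintegral_const_mul' _ _ ENNReal.ofReal_ne_top
      _ < ⊤ := ENNReal.mul_lt_top ENNReal.ofReal_lt_top hfin
end

section
/- Let a be an elliptic polynomial of degree d with coefficients in ℤ_p, let β > 0, let T > 0, and let μ be a regular Borel measure on ℚ_p^N satisfying ∫_{ℚ_p^N} ‖ξ‖_p^{dβ} dμ(ξ) < +∞. Then: (1) lim_{h→0⁺} ∫₀^T ∫_{ℚ_p^N} sup{ |e^{−r|a(ξ)|_p^β} − e^{−t|a(ξ)|_p^β}|² : r ∈ [0,T], |r−t| < h } dμ(ξ) dt = 0; and (2) ∫₀^T ∫_{ℚ_p^N} e^{−2t|a(ξ)|_p^β} dμ(ξ) dt < +∞. -/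
open MeasureTheory Complex Filter

section AuxLemmas

lemma aux_exp_lip {x y : ℝ} (hx : 0 ≤ x) (hy : 0 ≤ y) :
    |Real.exp (-x) - Real.exp (-y)| ≤ |x - y| := by
  wlog hxy : x ≤ y generalizing x y
  · rw [abs_sub_comm, abs_sub_comm x y]; exact this hy hx (le_of_not_ge hxy)
  have h1 : Real.exp (-x) ≤ 1 := Real.exp_le_one_iff.mpr (by linarith)
  have h2 : Real.exp (-y) ≤ Real.exp (-x) := Real.exp_le_exp.mpr (by linarith)
  have h3 : Real.exp (-x) * Real.exp (x - y) = Real.exp (-y) := by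
    rw [← Real.exp_add]; ring_nf
  have h4 : (x - y) + 1 ≤ Real.exp (x - y) := Real.add_one_le_exp _
  have h5 : 0 < Real.exp (-x) := Real.exp_pos _
  rw [_root_.abs_of_nonneg (by linarith), _root_.abs_of_nonpos (by linarith)]
  nlinarith

lemma aux_exp_bdd {x y : ℝ} (hx : 0 ≤ x) (hy : 0 ≤ y) :
    |Real.exp (-x) - Real.exp (-y)| ≤ 1 := by
  have h1 : Real.exp (-x) ≤ 1 := Real.exp_le_one_iff.mpr (by linarith)
  have h2 : Real.exp (-y) ≤ 1 := Real.exp_le_one_iff.mpr (by linarith)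
  have h3 : 0 < Real.exp (-x) := Real.exp_pos _
  have h4 : 0 < Real.exp (-y) := Real.exp_pos _
  rw [abs_le]; constructor <;> linarith

lemma aux_norm_eval_le {p N d : ℕ} [Fact p.Prime] (a : MvPolynomial (Fin N) ℤ_[p])
    (hhom : MvPolynomial.IsHomogeneous a d) (ξ : Fin N → ℚ_[p]) :
    ‖evalPoly p N a ξ‖ ≤ ‖ξ‖ ^ d := by
  rw [evalPoly, MvPolynomial.eval_eq]
  apply IsUltrametricDist.norm_sum_le_of_forall_le_of_nonneg (pow_nonneg (norm_nonneg ξ) d)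
  intro v hv
  rw [norm_mul]
  have hc : ‖(MvPolynomial.map (PadicInt.Coe.ringHom (p := p)) a).coeff v‖ ≤ 1 := by
    rw [MvPolynomial.coeff_map]
    exact (a.coeff v).norm_le_one
  have hdeg : ∑ i ∈ v.support, v i = d := by
    have hne : a.coeff v ≠ 0 := by
      intro h0
      apply MvPolynomial.support_map_subset _ _ at hv
      rw [MvPolynomial.mem_support_iff] at hv
      exact hv h0
    simpa [Finsupp.weight_apply, Finsupp.sum, smul_eq_mul] using hhom hne
  calc ‖(MvPolynomial.map (PadicInt.Coe.ringHom (p := p)) a).coeff v‖ *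
        ‖∏ i ∈ v.support, ξ i ^ v i‖
      ≤ 1 * ∏ i ∈ v.support, ‖ξ i‖ ^ v i := by
        rw [norm_prod]
        simp only [norm_pow]
        exact mul_le_mul_of_nonneg_right hc
          (Finset.prod_nonneg fun i _ => pow_nonneg (norm_nonneg _) _)
    _ ≤ ∏ i ∈ v.support, ‖ξ‖ ^ v i := by
        rw [one_mul]
        apply Finset.prod_le_prod (fun i _ => pow_nonneg (norm_nonneg _) _)
        intro i _
        exact pow_le_pow_left₀ (norm_nonneg _) (norm_le_pi_norm ξ i) _
    _ = ‖ξ‖ ^ d := by rw [Finset.prod_pow_eq_pow_sum, hdeg]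

end AuxLemmas

/-- If `∫ ‖ξ‖_p^{dβ} dμ(ξ) < ∞` then Hypothesis B holds for the heat
kernel, i.e. the modulus-of-continuity integral of `FΓ` tends to `0`, and moreover
`∫₀^T ∫ |FΓ(t)(ξ)|² dμ(ξ) dt < ∞`. -/
theorem hypothesis_B_of_moment {p : ℕ} [Fact p.Prime] {N d : ℕ}
    (a : MvPolynomial (Fin N) ℤ_[p]) (ha : IsElliptic p N a d)
    (β T : ℝ) (hβ : 0 < β) (hT : 0 < T)
    (μ : Measure (Fin N → ℚ_[p])) [μ.Regular]
    (hmom : ∫⁻ ξ, ENNReal.ofReal (‖ξ‖ ^ ((d : ℝ) * β)) ∂μ < ⊤) :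
    Tendsto (fun h : ℝ =>
        ∫⁻ t in Set.Ioc (0 : ℝ) T, ∫⁻ ξ, ENNReal.ofReal
          (⨆ r ∈ {r : ℝ | r ∈ Set.Icc (0 : ℝ) T ∧ |r - t| < h},
            |Real.exp (-(r * ‖evalPoly p N a ξ‖ ^ β)) -
              Real.exp (-(t * ‖evalPoly p N a ξ‖ ^ β))| ^ 2) ∂μ)
      (nhdsWithin 0 (Set.Ioi 0)) (nhds 0) ∧
    (∫⁻ t in Set.Ioc (0 : ℝ) T,
        ∫⁻ ξ, ENNReal.ofReal (Real.exp (-(2 * t * ‖evalPoly p N a ξ‖ ^ β))) ∂μ < ⊤) := by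
  obtain ⟨hd, hhom, -⟩ := ha
  set B : (Fin N → ℚ_[p]) → ℝ := fun ξ => ‖ξ‖ ^ ((d : ℝ) * β) with hBdef
  have hB0 : ∀ ξ, 0 ≤ B ξ := fun ξ => Real.rpow_nonneg (norm_nonneg _) _
  have hA0 : ∀ ξ : Fin N → ℚ_[p], 0 ≤ ‖evalPoly p N a ξ‖ ^ β :=
    fun ξ => Real.rpow_nonneg (norm_nonneg _) _
  have hAle : ∀ ξ : Fin N → ℚ_[p], ‖evalPoly p N a ξ‖ ^ β ≤ B ξ := by
    intro ξ
    calc ‖evalPoly p N a ξ‖ ^ β ≤ (‖ξ‖ ^ d) ^ β :=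
          Real.rpow_le_rpow (norm_nonneg _) (aux_norm_eval_le a hhom ξ) hβ.le
      _ = B ξ := by
          rw [hBdef, ← Real.rpow_natCast ‖ξ‖ d, ← Real.rpow_mul (norm_nonneg _)]
  set M := ∫⁻ ξ, ENNReal.ofReal (B ξ) ∂μ with hMdef
  have hMne : M ≠ ⊤ := hmom.ne
  -- μ is a finite measure
  have hmeasB : Measurable fun ξ : Fin N → ℚ_[p] => ENNReal.ofReal (B ξ) :=
    ENNReal.measurable_ofReal.comp
      ((Real.continuous_rpow_const (mul_nonneg (Nat.cast_nonneg d) hβ.le)).measurable.comp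
        measurable_norm)
  have hfin : μ Set.univ < ⊤ := by
    have h1 : μ (Metric.closedBall (0 : Fin N → ℚ_[p]) 1) < ⊤ :=
      (isCompact_closedBall (0 : Fin N → ℚ_[p]) 1).measure_lt_top
    have h2 : μ {ξ : Fin N → ℚ_[p] | 1 < ‖ξ‖} < ⊤ := by
      have hsub : {ξ : Fin N → ℚ_[p] | 1 < ‖ξ‖} ⊆
          {ξ | 1 ≤ ENNReal.ofReal (B ξ)} := by
        intro ξ hξ
        have h1B : (1:ℝ) ≤ B ξ := by
          have := Real.rpow_le_rpow zero_le_one (le_of_lt hξ)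
            (mul_nonneg (Nat.cast_nonneg d) hβ.le)
          simpa [Real.one_rpow] using this
        simpa using ENNReal.one_le_ofReal.mpr h1B
      calc μ {ξ : Fin N → ℚ_[p] | 1 < ‖ξ‖}
          ≤ μ {ξ | 1 ≤ ENNReal.ofReal (B ξ)} := measure_mono hsub
        _ = 1 * μ {ξ | 1 ≤ ENNReal.ofReal (B ξ)} := (one_mul _).symm
        _ ≤ M := mul_meas_ge_le_lintegral₀ hmeasB.aemeasurable 1
        _ < ⊤ := hmom
    calc μ Set.univ
        ≤ μ (Metric.closedBall 0 1 ∪ {ξ : Fin N → ℚ_[p] | 1 < ‖ξ‖}) := by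
          apply measure_mono
          intro ξ _
          rcases le_or_gt ‖ξ‖ 1 with h | h
          · exact Or.inl (mem_closedBall_zero_iff.mpr h)
          · exact Or.inr h
      _ ≤ μ (Metric.closedBall 0 1) + μ {ξ : Fin N → ℚ_[p] | 1 < ‖ξ‖} :=
          measure_union_le _ _
      _ < ⊤ := ENNReal.add_lt_top.mpr ⟨h1, h2⟩
  constructor
  · -- Part 1
    have bound : ∀ h : ℝ, 0 < h → ∀ t ∈ Set.Ioc (0:ℝ) T, ∀ ξ : Fin N → ℚ_[p],
        (⨆ r ∈ {r : ℝ | r ∈ Set.Icc (0 : ℝ) T ∧ |r - t| < h},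
            |Real.exp (-(r * ‖evalPoly p N a ξ‖ ^ β)) -
              Real.exp (-(t * ‖evalPoly p N a ξ‖ ^ β))| ^ 2) ≤ h * B ξ := by
      intro h hh t ht ξ
      have hBh : 0 ≤ h * B ξ := mul_nonneg hh.le (hB0 ξ)
      refine Real.iSup_le (fun r => Real.iSup_le (fun hr => ?_) hBh) hBh
      obtain ⟨⟨hr0, hrT⟩, hrt⟩ := hr
      set A := ‖evalPoly p N a ξ‖ ^ β with hAdef
      have hA : 0 ≤ A := hA0 ξ
      have hx : 0 ≤ r * A := mul_nonneg hr0 hA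
      have hy : 0 ≤ t * A := mul_nonneg ht.1.le hA
      have l1 : |Real.exp (-(r * A)) - Real.exp (-(t * A))| ≤ A * h := by
        have l0 := aux_exp_lip hx hy
        have e : |r * A - t * A| = |r - t| * A := by
          rw [← sub_mul, abs_mul, _root_.abs_of_nonneg hA]
        rw [e] at l0
        calc |Real.exp (-(r * A)) - Real.exp (-(t * A))| ≤ |r - t| * A := l0
          _ ≤ h * A := mul_le_mul_of_nonneg_right hrt.le hA
          _ = A * h := mul_comm _ _
      have l2 : |Real.exp (-(r * A)) - Real.exp (-(t * A))| ≤ 1 := aux_exp_bdd hx hy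
      have labs : 0 ≤ |Real.exp (-(r * A)) - Real.exp (-(t * A))| := abs_nonneg _
      have hAB : A ≤ B ξ := hAle ξ
      rw [pow_two]
      nlinarith [mul_le_mul l2 l1 labs zero_le_one,
        mul_le_mul_of_nonneg_right hAB hh.le, hB0 ξ]
    have keyF : ∀ᶠ h in nhdsWithin (0:ℝ) (Set.Ioi 0),
        (∫⁻ t in Set.Ioc (0 : ℝ) T, ∫⁻ ξ, ENNReal.ofReal
          (⨆ r ∈ {r : ℝ | r ∈ Set.Icc (0 : ℝ) T ∧ |r - t| < h},
            |Real.exp (-(r * ‖evalPoly p N a ξ‖ ^ β)) -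
              Real.exp (-(t * ‖evalPoly p N a ξ‖ ^ β))| ^ 2) ∂μ)
          ≤ ENNReal.ofReal h * (M * ENNReal.ofReal T) := by
      filter_upwards [self_mem_nhdsWithin] with h hh
      have hh' : (0:ℝ) < h := hh
      calc (∫⁻ t in Set.Ioc (0 : ℝ) T, ∫⁻ ξ, ENNReal.ofReal
            (⨆ r ∈ {r : ℝ | r ∈ Set.Icc (0 : ℝ) T ∧ |r - t| < h},
              |Real.exp (-(r * ‖evalPoly p N a ξ‖ ^ β)) -
                Real.exp (-(t * ‖evalPoly p N a ξ‖ ^ β))| ^ 2) ∂μ)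
          ≤ ∫⁻ _ in Set.Ioc (0 : ℝ) T, ENNReal.ofReal h * M := by
            apply setLIntegral_mono measurable_const
            intro t ht
            calc (∫⁻ ξ, ENNReal.ofReal
                (⨆ r ∈ {r : ℝ | r ∈ Set.Icc (0 : ℝ) T ∧ |r - t| < h},
                  |Real.exp (-(r * ‖evalPoly p N a ξ‖ ^ β)) -
                    Real.exp (-(t * ‖evalPoly p N a ξ‖ ^ β))| ^ 2) ∂μ)
                ≤ ∫⁻ ξ, ENNReal.ofReal h * ENNReal.ofReal (B ξ) ∂μ := by
                  apply lintegral_mono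
                  intro ξ
                  calc ENNReal.ofReal _ ≤ ENNReal.ofReal (h * B ξ) :=
                        ENNReal.ofReal_le_ofReal (bound h hh' t ht ξ)
                    _ = ENNReal.ofReal h * ENNReal.ofReal (B ξ) :=
                        ENNReal.ofReal_mul hh'.le
              _ = ENNReal.ofReal h * M :=
                  lintegral_const_mul' _ _ ENNReal.ofReal_ne_top
        _ = (ENNReal.ofReal h * M) * volume (Set.Ioc (0:ℝ) T) := setLIntegral_const _ _
        _ = ENNReal.ofReal h * (M * ENNReal.ofReal T) := by
            rw [Real.volume_Ioc, sub_zero, mul_assoc]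
    have h0 : Tendsto (fun h : ℝ => ENNReal.ofReal h * (M * ENNReal.ofReal T))
        (nhdsWithin 0 (Set.Ioi 0)) (nhds 0) := by
      have h1 : Tendsto (fun h : ℝ => ENNReal.ofReal h)
          (nhdsWithin 0 (Set.Ioi 0)) (nhds 0) := by
        have := (ENNReal.continuous_ofReal.tendsto 0).mono_left
          (nhdsWithin_le_nhds (s := Set.Ioi (0:ℝ)))
        simpa using this
      have h2 := ENNReal.Tendsto.mul_const (b := M * ENNReal.ofReal T) h1
        (Or.inr (ENNReal.mul_ne_top hMne ENNReal.ofReal_ne_top))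
      simpa using h2
    exact tendsto_of_tendsto_of_tendsto_of_le_of_le' tendsto_const_nhds h0
      (Filter.Eventually.of_forall fun h => zero_le) keyF
  · -- Part 2
    calc (∫⁻ t in Set.Ioc (0 : ℝ) T,
          ∫⁻ ξ, ENNReal.ofReal (Real.exp (-(2 * t * ‖evalPoly p N a ξ‖ ^ β))) ∂μ)
        ≤ ∫⁻ _ in Set.Ioc (0 : ℝ) T, μ Set.univ := by
          apply setLIntegral_mono measurable_const
          intro t ht
          calc (∫⁻ ξ, ENNReal.ofReal (Real.exp (-(2 * t * ‖evalPoly p N a ξ‖ ^ β))) ∂μ)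
              ≤ ∫⁻ _, 1 ∂μ := by
                apply lintegral_mono
                intro ξ
                apply ENNReal.ofReal_le_one.mpr
                apply Real.exp_le_one_iff.mpr
                have : 0 ≤ 2 * t * ‖evalPoly p N a ξ‖ ^ β :=
                  mul_nonneg (by linarith [ht.1]) (hA0 ξ)
                linarith
            _ = μ Set.univ := lintegral_one
      _ = μ Set.univ * volume (Set.Ioc (0:ℝ) T) := setLIntegral_const _ _
      _ < ⊤ := ENNReal.mul_lt_top hfin (by rw [Real.volume_Ioc]; exact ENNReal.ofReal_lt_top)
end
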